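/- Let k ≥ 2 be an integer, let n be a positive multiple of k, put m = n/k, and partition [n] = {1,…,n} into the k consecutive blocks B_i = {(i−1)m+1, …, im} for i = 1,…,k. Let σ and τ be permutations of [n] with σ(B_i) = B_i and τ(B_i) = B_i for every i, and suppose there exist indices i ≠ j such that the restrictions of σ and τ to B_i differ and the restrictions of σ and τ to B_j differ. Then σ and τ are locally encapsulating. -/

import Mathlib

/-- Two permutations `σ` and `τ` of `[n]` are *locally encapsulating* if there exist
elements `a, b` with `σ⁻¹(a) < σ⁻¹(b)` and `τ⁻¹(a) < τ⁻¹(b)` such that one of the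
position intervals `[σ⁻¹(a), σ⁻¹(b)]`, `[τ⁻¹(a), τ⁻¹(b)]` strictly contains the other. -/
def LocallyEncapsulating {n : ℕ} (σ τ : Equiv.Perm (Fin n)) : Prop :=
  ∃ a b : Fin n, σ⁻¹ a < σ⁻¹ b ∧ τ⁻¹ a < τ⁻¹ b ∧
    (Set.Icc (σ⁻¹ a) (σ⁻¹ b) ⊂ Set.Icc (τ⁻¹ a) (τ⁻¹ b) ∨
     Set.Icc (τ⁻¹ a) (τ⁻¹ b) ⊂ Set.Icc (σ⁻¹ a) (σ⁻¹ b))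

/-- Partition `[n]`, `n = k * m`, into `k` consecutive blocks of length `m`
(with `0`-indexed positions, the block of `x` is `(x : ℕ) / m`). If two
block-preserving permutations differ on at least two blocks, then they are
locally encapsulating. -/
theorem locallyEncapsulating_of_differ_on_two_blocks (k n m : ℕ) (hk : 2 ≤ k)
    (hn : 0 < n) (hnm : n = k * m) (σ τ : Equiv.Perm (Fin n))
    (hσ : ∀ x : Fin n, (σ x : ℕ) / m = (x : ℕ) / m)
    (hτ : ∀ x : Fin n, (τ x : ℕ) / m = (x : ℕ) / m)
    (hdiff : ∃ i j : ℕ, i ≠ j ∧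
      (∃ x : Fin n, (x : ℕ) / m = i ∧ σ x ≠ τ x) ∧
      (∃ x : Fin n, (x : ℕ) / m = j ∧ σ x ≠ τ x)) :
    LocallyEncapsulating σ τ := by
  classical
  obtain ⟨i, j, hij, ⟨x, hxi, hx⟩, ⟨y, hyj, hy⟩⟩ := hdiff
  -- inverses also preserve blocks
  have inv_pres : ∀ (π : Equiv.Perm (Fin n)),
      (∀ x : Fin n, (π x : ℕ) / m = (x : ℕ) / m) →
      ∀ x : Fin n, ((π⁻¹ x : Fin n) : ℕ) / m = (x : ℕ) / m := by
    intro π hπ x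
    have := hπ (π⁻¹ x)
    rw [show π (π⁻¹ x) = x from (Equiv.eq_symm_apply π).mp rfl] at this; exact this.symm
  have hσ' := inv_pres σ hσ
  have hτ' := inv_pres τ hτ
  set S : ℕ → Finset (Fin n) := fun i => Finset.univ.filter (fun a => (a : ℕ) / m = i) with hS
  have himg : ∀ (π : Equiv.Perm (Fin n)),
      (∀ x : Fin n, ((π x : Fin n) : ℕ) / m = (x : ℕ) / m) →
      ∀ i, (S i).image π = S i := by
    intro π hπ i
    apply Finset.eq_of_subset_of_card_le
    · intro b hb
      simp only [Finset.mem_image] at hb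
      obtain ⟨a, ha, rfl⟩ := hb
      simp only [hS, Finset.mem_filter, Finset.mem_univ, true_and] at ha ⊢
      rw [hπ a]; exact ha
    · rw [Finset.card_image_of_injective _ π.injective]
  have hsum : ∀ (π : Equiv.Perm (Fin n)),
      (∀ x : Fin n, ((π x : Fin n) : ℕ) / m = (x : ℕ) / m) →
      ∀ i, ∑ a ∈ S i, ((π a : Fin n) : ℕ) = ∑ a ∈ S i, (a : ℕ) := by
    intro π hπ i
    conv_rhs => rw [← himg π hπ i]
    exact (Finset.sum_image (by intro a _ b _ h; exact π.injective h)).symm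
  have hex : ∀ (π ρ : Equiv.Perm (Fin n)),
      (∀ x : Fin n, ((π x : Fin n) : ℕ) / m = (x : ℕ) / m) →
      (∀ x : Fin n, ((ρ x : Fin n) : ℕ) / m = (x : ℕ) / m) →
      ∀ i, (∃ a : Fin n, (a : ℕ) / m = i ∧ π a ≠ ρ a) →
      ∃ a : Fin n, (a : ℕ) / m = i ∧ ((π a : Fin n) : ℕ) < ((ρ a : Fin n) : ℕ) := by
    intro π ρ hπ hρ i ⟨a0, ha0, hne⟩
    by_contra hc
    push_neg at hc
    have hle : ∀ a ∈ S i, ((ρ a : Fin n) : ℕ) ≤ ((π a : Fin n) : ℕ) := by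
      intro a ha
      simp only [hS, Finset.mem_filter, Finset.mem_univ, true_and] at ha
      exact hc a ha
    have heq := (Finset.sum_eq_sum_iff_of_le hle).mp
      (by rw [hsum π hπ i, hsum ρ hρ i])
    have h0 := heq a0 (by simp [hS, ha0])
    exact hne (Fin.ext h0.symm)
  -- core lemma for i < j
  have core : ∀ i j : ℕ, i < j →
      (∃ a : Fin n, (a : ℕ) / m = i ∧ σ⁻¹ a ≠ τ⁻¹ a) →
      (∃ b : Fin n, (b : ℕ) / m = j ∧ σ⁻¹ b ≠ τ⁻¹ b) →
      LocallyEncapsulating σ τ := by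
    intro i j hij ha hb
    obtain ⟨a, hai, halt⟩ := hex τ⁻¹ σ⁻¹ hτ' hσ' i
      (ha.imp fun a ⟨h1, h2⟩ => ⟨h1, h2.symm⟩)
    obtain ⟨b, hbj, hblt⟩ := hex σ⁻¹ τ⁻¹ hσ' hτ' j hb
    -- halt : τ⁻¹ a < σ⁻¹ a,  hblt : σ⁻¹ b < τ⁻¹ b (as ℕ)
    have cross : ∀ (π : Equiv.Perm (Fin n)),
        (∀ x : Fin n, ((π x : Fin n) : ℕ) / m = (x : ℕ) / m) →
        ((π a : Fin n) : ℕ) < ((π b : Fin n) : ℕ) := by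
      intro π hπ
      by_contra h
      push_neg at h
      have := Nat.div_le_div_right (c := m) h
      rw [hπ a, hπ b, hai, hbj] at this
      omega
    have habσ := cross σ⁻¹ hσ'
    have habτ := cross τ⁻¹ hτ'
    refine ⟨a, b, Fin.lt_def.mpr habσ, Fin.lt_def.mpr habτ, Or.inl ?_⟩
    have hsub : Set.Icc (σ⁻¹ a) (σ⁻¹ b) ⊆ Set.Icc (τ⁻¹ a) (τ⁻¹ b) :=
      Set.Icc_subset_Icc (le_of_lt (Fin.lt_def.mpr halt)) (le_of_lt (Fin.lt_def.mpr hblt))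
    refine (Set.ssubset_iff_of_subset hsub).mpr ⟨τ⁻¹ a,
      Set.left_mem_Icc.mpr (le_of_lt (Fin.lt_def.mpr habτ)), fun hmem => ?_⟩
    rw [Set.mem_Icc] at hmem
    exact absurd hmem.1 (not_le.mpr (Fin.lt_def.mpr halt))
  -- produce witnesses in terms of σ⁻¹, τ⁻¹
  have wit : ∀ z : Fin n, σ z ≠ τ z →
      ∃ a : Fin n, (a : ℕ) / m = (z : ℕ) / m ∧ σ⁻¹ a ≠ τ⁻¹ a := by
    intro z hz
    refine ⟨σ z, hσ z, ?_⟩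
    rw [show σ⁻¹ (σ z) = z from Equiv.Perm.inv_eq_iff_eq.mpr rfl]
    intro h
    have := congrArg τ h
    rw [show τ (τ⁻¹ (σ z)) = σ z from (Equiv.eq_symm_apply τ).mp rfl] at this
    exact hz this.symm
  have wa := wit x hx
  have wb := wit y hy
  rw [hxi] at wa
  rw [hyj] at wb
  rcases lt_or_gt_of_ne hij with h | h
  · exact core i j h wa wb
  · exact core j i h wb wa
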